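/- For every set S ⊆ ℤ^n, the μ-closure cl_μ(S) of S is contained in the UTVPI closure cl_UTVPI(S) of S. -/
import Mathlib


/-- Componentwise closedness of a set of `ι`-indexed integer vectors under a
`k`-ary operation `f : ℤ^k → ℤ`. -/
def CptClosed {k : ℕ} {ι : Type*} (f : (Fin k → ℤ) → ℤ) (S : Set (ι → ℤ)) : Prop :=
  ∀ x : Fin k → ι → ℤ, (∀ l, x l ∈ S) → (fun i => f (fun l => x l i)) ∈ S

/-- `f : ℤ³ → ℤ` is a majority operation. -/
def IsMajorityOp (f : (Fin 3 → ℤ) → ℤ) : Prop :=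
  ∀ a b : ℤ, f ![a, a, b] = a ∧ f ![a, b, a] = a ∧ f ![b, a, a] = a

/-- `S` is closed under some majority operation. -/
def MajClosed {ι : Type*} (S : Set (ι → ℤ)) : Prop :=
  ∃ f : (Fin 3 → ℤ) → ℤ, IsMajorityOp f ∧ CptClosed f S

/-- The projection `π_{i,j}(x) = (x_i, x_j)`. -/
def proj2 {n : ℕ} (i j : Fin n) (x : Fin n → ℤ) : Fin 2 → ℤ := ![x i, x j]

/-- The projection `π_{i,j}(S)`. -/
def projSet {n : ℕ} (i j : Fin n) (S : Set (Fin n → ℤ)) : Set (Fin 2 → ℤ) :=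
  proj2 i j '' S

/-- The join `⋈_{1 ≤ i < j ≤ n} F i j`. -/
def joinPairs {n : ℕ} (F : Fin n → Fin n → Set (Fin 2 → ℤ)) : Set (Fin n → ℤ) :=
  {x | ∀ i j : Fin n, i < j → proj2 i j x ∈ F i j}

/-- The `f`-closure of `S`: the intersection of all `f`-closed supersets of `S`. -/
def clOp {k m : ℕ} (f : (Fin k → ℤ) → ℤ) (S : Set (Fin m → ℤ)) : Set (Fin m → ℤ) :=
  ⋂₀ {T | S ⊆ T ∧ CptClosed f T}

/-- The directed discrete midpoint operation `μ`. -/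
def muOp : (Fin 2 → ℤ) → ℤ := fun t =>
  if t 1 ≤ t 0 then ⌈((t 0 + t 1 : ℤ) : ℚ) / 2⌉ else ⌊((t 0 + t 1 : ℤ) : ℚ) / 2⌋

/-- The operation `g(x,y) = ⌈(x+y)/2⌉`. -/
def ceilAvgOp : (Fin 2 → ℤ) → ℤ := fun t => ⌈((t 0 + t 1 : ℤ) : ℚ) / 2⌉

/-- The operation `h(x,y) = ⌊(x+y)/2⌋`. -/
def floorAvgOp : (Fin 2 → ℤ) → ℤ := fun t => ⌊((t 0 + t 1 : ℤ) : ℚ) / 2⌋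

/-- The median operation on three integers. -/
def medianOp : (Fin 3 → ℤ) → ℤ := fun t =>
  max (max (min (t 0) (t 1)) (min (t 1) (t 2))) (min (t 0) (t 2))

/-- The canonical embedding `ℤ^m → ℝ^m`. -/
def toR {m : ℕ} (z : Fin m → ℤ) : Fin m → ℝ := fun l => (z l : ℝ)

/-- The integer neighborhood `N(x)` of a real vector `x`. -/
def intNbhd {m : ℕ} (x : Fin m → ℝ) : Set (Fin m → ℤ) :=
  {z | ∀ j, |(z j : ℝ) - x j| < 1}

/-- `S` is midpoint-neighbor-closed: for all `x, y ∈ S`, `N((x+y)/2) ⊆ S`. -/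
def MidpointNeighborClosed {m : ℕ} (S : Set (Fin m → ℤ)) : Prop :=
  ∀ x ∈ S, ∀ y ∈ S, ∀ z : Fin m → ℤ,
    (∀ j, |(z j : ℝ) - ((x j : ℝ) + (y j : ℝ)) / 2| < 1) → z ∈ S

/-- `S ⊆ ℤ^m` is integrally convex. -/
def IntegrallyConvex {m : ℕ} (S : Set (Fin m → ℤ)) : Prop :=
  ∀ x : Fin m → ℝ, x ∈ convexHull ℝ (toR '' S) →
    x ∈ convexHull ℝ (toR '' (S ∩ intNbhd x))

/-- The closed convex closure of `T ⊆ ℤ^m` inside `ℝ^m`: the intersection of all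
topologically closed convex sets containing `T`. -/
def closedConvexClosure {m : ℕ} (T : Set (Fin m → ℤ)) : Set (Fin m → ℝ) :=
  ⋂₀ {C : Set (Fin m → ℝ) | Convex ℝ C ∧ IsClosed C ∧ toR '' T ⊆ C}

/-- `S = cl_conv̄(S) ∩ ℤ^m`. -/
def ClosedConvexIntegral {m : ℕ} (S : Set (Fin m → ℤ)) : Prop :=
  S = {z : Fin m → ℤ | toR z ∈ closedConvexClosure S}

/-- All entries of `A` lie in `{0, -1, +1}`. -/
def UnitMatrix {mR n : ℕ} (A : Matrix (Fin mR) (Fin n) ℤ) : Prop :=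
  ∀ i j, A i j = 0 ∨ A i j = -1 ∨ A i j = 1

/-- Each row of `A` has at most `c` nonzero entries. -/
def RowSupportLE {mR n : ℕ} (A : Matrix (Fin mR) (Fin n) ℤ) (c : ℕ) : Prop :=
  ∀ i, {j | A i j ≠ 0}.ncard ≤ c

/-- `S` is representable by a UTVPI system. -/
def RepUTVPI {n : ℕ} (S : Set (Fin n → ℤ)) : Prop :=
  ∃ (mR : ℕ) (A : Matrix (Fin mR) (Fin n) ℤ) (b : Fin mR → ℝ),
    UnitMatrix A ∧ RowSupportLE A 2 ∧
    S = {x | ∀ i, b i ≤ ((∑ j, A i j * x j : ℤ) : ℝ)}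

/-- `S` is representable by an SVPI system. -/
def RepSVPI {n : ℕ} (S : Set (Fin n → ℤ)) : Prop :=
  ∃ (mR : ℕ) (A : Matrix (Fin mR) (Fin n) ℤ) (b : Fin mR → ℝ),
    UnitMatrix A ∧ RowSupportLE A 1 ∧
    S = {x | ∀ i, b i ≤ ((∑ j, A i j * x j : ℤ) : ℝ)}

/-- `S` is representable by a DC system. -/
def RepDC {n : ℕ} (S : Set (Fin n → ℤ)) : Prop :=
  ∃ (mR : ℕ) (A : Matrix (Fin mR) (Fin n) ℤ) (b : Fin mR → ℝ),
    UnitMatrix A ∧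
    (∀ i, {j | A i j = 1}.ncard ≤ 1) ∧ (∀ i, {j | A i j = -1}.ncard ≤ 1) ∧
    S = {x | ∀ i, b i ≤ ((∑ j, A i j * x j : ℤ) : ℝ)}

/-- `S` is representable by a TVPI system with possibly infinitely many inequalities. -/
def RepTVPIInf {n : ℕ} (S : Set (Fin n → ℤ)) : Prop :=
  ∃ (I : Type) (a1 a2 b : I → ℝ) (p q : I → Fin n),
    S = {x | ∀ i : I, b i ≤ a1 i * (x (p i) : ℝ) + a2 i * (x (q i) : ℝ)}

/-- `S` is 2-decomposable: `S = ⋈_{i<j} π_{i,j}(S)`. -/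
def TwoDecomposable {ι : Type*} [LinearOrder ι] (S : Set (ι → ℤ)) : Prop :=
  S = {x | ∀ i j : ι, i < j → ∃ s ∈ S, s i = x i ∧ s j = x j}


def mu2 (a b : ℤ) : ℤ := if b ≤ a then ⌈((a + b : ℤ) : ℚ) / 2⌉ else ⌊((a + b : ℤ) : ℚ) / 2⌋

lemma muOp_apply (t : Fin 2 → ℤ) : muOp t = mu2 (t 0) (t 1) := rfl

lemma mu2_eq (a b : ℤ) : mu2 a b = if b ≤ a then -((-(a+b)) / 2) else (a+b) / 2 := by
  unfold mu2
  have hf : ∀ m : ℤ, ⌊((m : ℤ) : ℚ) / 2⌋ = m / 2 := by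
    intro m
    have := Rat.floor_intCast_div_natCast m 2
    simpa using this
  have hc : ∀ m : ℤ, ⌈((m : ℤ) : ℚ) / 2⌉ = -((-m) / 2) := by
    intro m
    have h1 : ⌊(((-m : ℤ)):ℚ)/2⌋ = -⌈((m:ℤ):ℚ)/2⌉ := by
      rw [show (((-m:ℤ)):ℚ)/2 = -(((m:ℤ):ℚ)/2) by push_cast; ring, Int.floor_neg]
    have h2 := hf (-m)
    omega
  split
  · rw [hc]
  · rw [hf]

lemma mu2_one (a b : ℤ) : min a b ≤ mu2 a b := by
  rw [mu2_eq]; split <;> omega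

lemma mu2_two (a b c d : ℤ) : min (a + c) (b + d) ≤ mu2 a b + mu2 c d := by
  rw [mu2_eq, mu2_eq]; split <;> split <;> omega

lemma mu2_neg (a b : ℤ) : mu2 (-a) (-b) = -(mu2 a b) := by
  rw [mu2_eq, mu2_eq]; rcases lt_trichotomy a b with h|h|h <;> simp_all <;> omega

lemma mu2_mul (a x y : ℤ) (ha : a = 0 ∨ a = -1 ∨ a = 1) :
    a * mu2 x y = mu2 (a * x) (a * y) := by
  rcases ha with rfl|rfl|rfl
  · simp [mu2_eq]
  · simpa using (mu2_neg x y).symm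
  · simp

lemma row_bound {n : ℕ} (a x y : Fin n → ℤ)
    (h1 : ∀ j, a j = 0 ∨ a j = -1 ∨ a j = 1)
    (h2 : {j | a j ≠ 0}.ncard ≤ 2) :
    min (∑ j, a j * x j) (∑ j, a j * y j) ≤ ∑ j, a j * mu2 (x j) (y j) := by
  classical
  set t : Finset (Fin n) := {j | a j ≠ 0}.toFinset with ht
  have key : ∀ f : Fin n → ℤ, ∑ j ∈ t, a j * f j = ∑ j, a j * f j := by
    intro f
    refine Finset.sum_subset (Finset.subset_univ t) fun j _ hj => ?_
    have : a j = 0 := by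
      by_contra h
      exact hj (by simp [ht, Set.mem_toFinset, h])
    simp [this]
  rw [← key, ← key, ← key]
  have hc : t.card ≤ 2 := by
    rwa [Set.ncard_eq_toFinset_card'] at h2
  rcases Nat.lt_or_ge t.card 1 with h | h
  · have h0 : t = ∅ := Finset.card_eq_zero.mp (by omega)
    simp [h0]
  rcases Nat.lt_or_ge t.card 2 with h' | h'
  · obtain ⟨p, hp⟩ := Finset.card_eq_one.mp (by omega : t.card = 1)
    rw [hp, Finset.sum_singleton, Finset.sum_singleton, Finset.sum_singleton,
      mu2_mul _ _ _ (h1 p)]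
    exact mu2_one _ _
  · obtain ⟨p, q, hpq, hte⟩ := Finset.card_eq_two.mp (by omega : t.card = 2)
    rw [hte, Finset.sum_pair hpq, Finset.sum_pair hpq, Finset.sum_pair hpq,
      mu2_mul _ _ _ (h1 p), mu2_mul _ _ _ (h1 q)]
    exact mu2_two _ _ _ _

lemma utvpi_mu_closed {n mR : ℕ} (A : Matrix (Fin mR) (Fin n) ℤ) (b : Fin mR → ℝ)
    (hU : UnitMatrix A) (hR : RowSupportLE A 2) :
    CptClosed muOp {x : Fin n → ℤ | ∀ i, b i ≤ ((∑ j, A i j * x j : ℤ) : ℝ)} := by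
  intro xs hxs
  intro i
  have h0 := hxs 0 i
  have h1 := hxs 1 i
  have key := row_bound (A i) (xs 0) (xs 1) (fun j => hU i j) (hR i)
  show b i ≤ ((∑ j, A i j * mu2 (xs 0 j) (xs 1 j) : ℤ) : ℝ)
  rcases le_total (∑ j, A i j * xs 0 j) (∑ j, A i j * xs 1 j) with h | h
  · rw [min_eq_left h] at key
    exact le_trans h0 (by exact_mod_cast key)
  · rw [min_eq_right h] at key
    exact le_trans h1 (by exact_mod_cast key)

/-- the `μ`-closure of `S` is contained in the UTVPI closure of `S`. -/
theorem stmt_16 {n : ℕ} (S : Set (Fin n → ℤ)) :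
    clOp muOp S ⊆ ⋂₀ {T : Set (Fin n → ℤ) | S ⊆ T ∧ RepUTVPI T} := by
  intro x hx T hT
  obtain ⟨hST, mR, A, b, hU, hR, rfl⟩ := hT
  exact hx _ ⟨hST, utvpi_mu_closed A b hU hR⟩
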